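/- Let u : [0, ∞) → ℝ be defined by u(t) = (e^{t²/4} − 1)/t for t > 0 and u(0) = 0. Then u is differentiable on [0, ∞) and for all t ≥ 0, max(|u(t)|, |u'(t)|) ≤ e^{t²/4}/2. -/

import Mathlib

open Real

noncomputable def uFn (t : ℝ) : ℝ := (Real.exp (t ^ 2 / 4) - 1) / t

noncomputable def uD (t : ℝ) : ℝ :=
  if t = 0 then 1/4 else Real.exp (t ^ 2 / 4) / 2 - (Real.exp (t ^ 2 / 4) - 1) / t ^ 2

lemma exp_sub_one_le (x : ℝ) : Real.exp x - 1 ≤ x * Real.exp x := by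
  have key : Real.exp (-x) * Real.exp x = 1 := by
    rw [← Real.exp_add]; simp
  nlinarith [Real.add_one_le_exp (-x), Real.exp_pos x, Real.exp_pos (-x),
    mul_le_mul_of_nonneg_right (Real.add_one_le_exp (-x)) (Real.exp_pos x).le]

lemma slope_uFn (t : ℝ) : slope uFn 0 t = (Real.exp (t ^ 2 / 4) - 1) / t ^ 2 := by
  rw [slope_def_field, uFn, uFn]
  norm_num [Real.exp_zero]
  rw [div_div, ← sq]

theorem stmt_18 :
    ∃ u' : ℝ → ℝ, ∀ t : ℝ, 0 ≤ t →
      HasDerivWithinAt uFn (u' t) (Set.Ici 0) t ∧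
      max |uFn t| |u' t| ≤ Real.exp (t ^ 2 / 4) / 2 := by
  refine ⟨uD, fun t ht => ?_⟩
  rcases eq_or_lt_of_le ht with h0 | h0
  · subst h0
    constructor
    · rw [hasDerivWithinAt_iff_tendsto_slope]
      have hset : Set.Ici (0:ℝ) \ {0} = Set.Ioi 0 := by
        ext x; simp [Set.mem_diff, lt_iff_le_and_ne, eq_comm]
      rw [hset]
      have hval : uD 0 = 1/4 := by simp [uD]
      rw [hval]
      have hupper : Filter.Tendsto (fun t : ℝ => Real.exp (t ^ 2 / 4) / 4)
          (nhdsWithin 0 (Set.Ioi 0)) (nhds (1/4)) := by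
        have hc : Continuous fun t : ℝ => Real.exp (t ^ 2 / 4) / 4 := by continuity
        have h := hc.tendsto 0
        norm_num at h
        exact h.mono_left nhdsWithin_le_nhds
      refine tendsto_of_tendsto_of_tendsto_of_le_of_le' tendsto_const_nhds hupper ?_ ?_
      · filter_upwards [self_mem_nhdsWithin] with t ht
        have ht0 : (0:ℝ) < t := ht
        have h1 : 1 + t ^ 2 / 4 ≤ Real.exp (t ^ 2 / 4) := by
          have := Real.add_one_le_exp (t ^ 2 / 4); linarith
        rw [slope_uFn, le_div_iff₀ (by positivity)]
        nlinarith
      · filter_upwards [self_mem_nhdsWithin] with t ht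
        have ht0 : (0:ℝ) < t := ht
        have h2 := exp_sub_one_le (t ^ 2 / 4)
        rw [slope_uFn, div_le_iff₀ (by positivity)]
        nlinarith
    · have h1 : uFn 0 = 0 := by simp [uFn]
      have h2 : uD 0 = 1/4 := by simp [uD]
      rw [h1, h2]
      simp only [abs_zero]
      rw [abs_of_nonneg (by norm_num : (0:ℝ) ≤ 1/4)]
      norm_num [Real.exp_zero]
  · have htne : t ≠ 0 := ne_of_gt h0
    have hE := Real.exp_pos (t ^ 2 / 4)
    have h1 : 1 + t ^ 2 / 4 ≤ Real.exp (t ^ 2 / 4) := by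
      have := Real.add_one_le_exp (t ^ 2 / 4); linarith
    have h2 := exp_sub_one_le (t ^ 2 / 4)
    have huD : uD t = Real.exp (t ^ 2 / 4) / 2 - (Real.exp (t ^ 2 / 4) - 1) / t ^ 2 := by
      simp [uD, htne]
    constructor
    · have hd : HasDerivAt uFn (uD t) t := by
        have hx : HasDerivAt (fun s : ℝ => s ^ 2 / 4) (t / 2) t := by
          have := (hasDerivAt_pow 2 t).div_const 4
          refine this.congr_deriv ?_
          ring
        have hexp : HasDerivAt (fun s : ℝ => Real.exp (s ^ 2 / 4))
            (Real.exp (t ^ 2 / 4) * (t / 2)) t := (Real.hasDerivAt_exp _).comp t hx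
        have hnum : HasDerivAt (fun s : ℝ => Real.exp (s ^ 2 / 4) - 1)
            (Real.exp (t ^ 2 / 4) * (t / 2)) t := hexp.sub_const 1
        have := hnum.div (hasDerivAt_id t) htne
        refine this.congr_deriv ?_
        rw [huD]
        simp only [id]
        field_simp
      exact hd.hasDerivWithinAt
    · rw [max_le_iff]
      constructor
      · rw [abs_le]
        constructor
        · rw [uFn]
          have : (0:ℝ) ≤ (Real.exp (t ^ 2 / 4) - 1) / t :=
            div_nonneg (by linarith [sq_nonneg t]) h0.le
          linarith
        · rw [uFn, div_le_iff₀ h0]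
          nlinarith
      · rw [huD, abs_le]
        have h3 : 0 ≤ (Real.exp (t ^ 2 / 4) - 1) / t ^ 2 :=
          div_nonneg (by linarith [sq_nonneg t]) (by positivity)
        constructor
        · have : (Real.exp (t ^ 2 / 4) - 1) / t ^ 2 ≤ Real.exp (t ^ 2 / 4) := by
            rw [div_le_iff₀ (by positivity)]
            nlinarith
          linarith
        · linarith
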